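/- Let G = (L, B) be a finite connected graph with at least two vertices, let β > 0, let q ≥ 2 be an integer, let i ∈ {1,…,q}, and let x, y ∈ L with x ≠ y. If X is distributed according to the Potts Gibbs measure μ^G_{β,q}, then the correlation between the indicator of {X(x)=i} and the indicator of {X(y)=i} is strictly positive: μ^G_{β,q}(X(x)=i and X(y)=i) > 1/q². -/

import Mathlib

open Finset

noncomputable section

variable {V : Type*}

/-- The spanning subgraph of `G` consisting of the `η`-open edges. -/
def openSub (G : SimpleGraph V) (η : G.edgeSet → Bool) : SimpleGraph V :=
  SimpleGraph.fromEdgeSet {s : Sym2 V | ∃ h : s ∈ G.edgeSet, η ⟨s, h⟩ = true}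

/-- The number of open clusters of `η` (connected components of the spanning
subgraph of open edges, including isolated vertices). -/
def numClusters (G : SimpleGraph V) (η : G.edgeSet → Bool) : ℕ :=
  Nat.card (openSub G η).ConnectedComponent

/-- The factor `p^b (1-p)^(1-b)`. -/
def bWeight (p : ℝ) (b : Bool) : ℝ := if b then p else 1 - p

variable [Fintype V] [DecidableEq V]

/-- Unnormalized random-cluster weight. -/
def rcWeight (G : SimpleGraph V) [Fintype G.edgeSet] (p q : ℝ) (η : G.edgeSet → Bool) : ℝ :=
  (∏ e : G.edgeSet, bWeight p (η e)) * q ^ numClusters G η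

/-- The random-cluster measure `φ^G_{p,q}`. -/
def rcMeasure (G : SimpleGraph V) [Fintype G.edgeSet] (p q : ℝ) (η : G.edgeSet → Bool) : ℝ :=
  rcWeight G p q η / ∑ η' : G.edgeSet → Bool, rcWeight G p q η'

/-- Whether the spin configuration `σ` disagrees across an unordered pair. -/
def disagreeB {k : ℕ} (σ : V → Fin k) : Sym2 V → Bool :=
  Sym2.lift ⟨fun x y => decide (σ x ≠ σ y), fun x y => by simp [ne_comm]⟩

/-- Unnormalized Potts weight `exp(-2β · #{disagreeing edges})`. -/
def pottsWeight (G : SimpleGraph V) [Fintype G.edgeSet] (β : ℝ) {k : ℕ} (σ : V → Fin k) : ℝ :=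
  Real.exp (-2 * β * ∑ e : G.edgeSet, (if disagreeB σ e.val then (1 : ℝ) else 0))

/-- The `k`-state Potts Gibbs measure `μ^G_{β,k}`. -/
def pottsMeasure (G : SimpleGraph V) [Fintype G.edgeSet] (β : ℝ) {k : ℕ} (σ : V → Fin k) : ℝ :=
  pottsWeight G β σ / ∑ σ' : V → Fin k, pottsWeight G β σ'

/-- Unnormalized Edwards–Sokal weight. -/
def esWeight (G : SimpleGraph V) [Fintype G.edgeSet] (p : ℝ) {k : ℕ}
    (σ : V → Fin k) (η : G.edgeSet → Bool) : ℝ :=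
  ∏ e : G.edgeSet,
    bWeight p (η e) * (if η e = true ∧ disagreeB σ e.val = true then 0 else 1)

/-- The Edwards–Sokal measure `P^G_{p,k}`. -/
def esMeasure (G : SimpleGraph V) [Fintype G.edgeSet] (p : ℝ) {k : ℕ}
    (σ : V → Fin k) (η : G.edgeSet → Bool) : ℝ :=
  esWeight G p σ η /
    ∑ ση : (V → Fin k) × (G.edgeSet → Bool), esWeight G p ση.1 ση.2

/-- `σ` is constant on every open cluster of `η`. -/
def ConstOnClusters (G : SimpleGraph V) (η : G.edgeSet → Bool) {k : ℕ} (σ : V → Fin k) : Prop :=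
  ∀ x y : V, (openSub G η).Reachable x y → σ x = σ y

set_option linter.unusedSectionVars false
-- auxiliary
lemma disagreeB_mk {k : ℕ} (σ : V → Fin k) (a b : V) :
    disagreeB σ s(a, b) = decide (σ a ≠ σ b) := rfl

lemma constOnClusters_iff (G : SimpleGraph V) (η : G.edgeSet → Bool) {k : ℕ} (σ : V → Fin k) :
    ConstOnClusters G η σ ↔ ∀ e : G.edgeSet, η e = true → disagreeB σ e.val = false := by
  constructor
  · intro h e he
    obtain ⟨s, hs⟩ := e
    induction s using Sym2.ind with
    | _ a b =>
      have hadj : (openSub G η).Adj a b := by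
        rw [openSub, SimpleGraph.fromEdgeSet_adj]
        exact ⟨⟨hs, he⟩, (G.mem_edgeSet.mp hs).ne⟩
      have := h a b hadj.reachable
      simp [disagreeB_mk, this]
  · intro h u v huv
    obtain ⟨w⟩ := huv
    induction w with
    | nil => rfl
    | cons hadj p ih =>
      rename_i a b c
      rw [openSub, SimpleGraph.fromEdgeSet_adj] at hadj
      obtain ⟨⟨hmem, hη⟩, hne⟩ := hadj
      have := h ⟨s(a, b), hmem⟩ hη
      simp only [disagreeB_mk, decide_eq_false_iff_not, not_not] at this
      exact this.trans ih

open Classical in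
lemma indicator_eq (G : SimpleGraph V) [Fintype G.edgeSet] {k : ℕ} (σ : V → Fin k)
    (η : G.edgeSet → Bool) :
    (∏ e : G.edgeSet, (if η e = true ∧ disagreeB σ e.val = true then (0:ℝ) else 1)) =
      if ConstOnClusters G η σ then 1 else 0 := by
  by_cases h : ConstOnClusters G η σ
  · rw [if_pos h]
    apply Finset.prod_eq_one
    intro e _
    rw [if_neg]
    rintro ⟨h1, h2⟩
    rw [(constOnClusters_iff G η σ).mp h e h1] at h2
    exact Bool.false_ne_true h2
  · rw [if_neg h]
    rw [constOnClusters_iff] at h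
    push_neg at h
    obtain ⟨e, he, hd⟩ := h
    apply Finset.prod_eq_zero (Finset.mem_univ e)
    rw [if_pos ⟨he, Bool.not_eq_false _ |>.mp hd⟩]

lemma esWeight_split (G : SimpleGraph V) [Fintype G.edgeSet] (p : ℝ) {k : ℕ}
    (σ : V → Fin k) (η : G.edgeSet → Bool) :
    esWeight G p σ η = (∏ e : G.edgeSet, bWeight p (η e)) *
      (∏ e : G.edgeSet, (if η e = true ∧ disagreeB σ e.val = true then (0:ℝ) else 1)) := by
  rw [esWeight, Finset.prod_mul_distrib]

lemma pottsWeight_eq_sum (G : SimpleGraph V) [Fintype G.edgeSet] (β : ℝ) {k : ℕ} (σ : V → Fin k) :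
    pottsWeight G β σ = ∑ η : G.edgeSet → Bool, esWeight G (1 - Real.exp (-2*β)) σ η := by
  set p : ℝ := 1 - Real.exp (-2*β) with hp
  have key : ∀ e : G.edgeSet, Real.exp (-2*β * (if disagreeB σ e.val then (1:ℝ) else 0)) =
      ∑ b : Bool, bWeight p b * (if b = true ∧ disagreeB σ e.val = true then (0:ℝ) else 1) := by
    intro e
    cases h : disagreeB σ e.val <;>
      simp [h, bWeight, Fintype.sum_bool, hp] <;> ring_nf
  calc pottsWeight G β σ
      = ∏ e : G.edgeSet, Real.exp (-2*β * (if disagreeB σ e.val then (1:ℝ) else 0)) := by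
        rw [pottsWeight, Finset.mul_sum, Real.exp_sum]
    _ = ∏ e : G.edgeSet, ∑ b : Bool,
          bWeight p b * (if b = true ∧ disagreeB σ e.val = true then (0:ℝ) else 1) :=
        Finset.prod_congr rfl fun e _ => key e
    _ = ∑ η ∈ Fintype.piFinset (fun _ : G.edgeSet => (Finset.univ : Finset Bool)),
          ∏ e : G.edgeSet, bWeight p (η e) * (if η e = true ∧ disagreeB σ e.val = true then (0:ℝ) else 1) :=
        Finset.prod_univ_sum _ _
    _ = ∑ η : G.edgeSet → Bool, esWeight G p σ η := by
        rw [Fintype.piFinset_univ]; rfl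

open Classical in
lemma fiber_card_le (G : SimpleGraph V) (η : G.edgeSet → Bool) {q : ℕ}
    (i : Fin q) (x y : V) (jk : Fin q × Fin q) :
    ((univ : Finset (V → Fin q)).filter
        (fun σ => ConstOnClusters G η σ ∧ (σ x, σ y) = jk)).card ≤
      ((univ : Finset (V → Fin q)).filter
        (fun σ => ConstOnClusters G η σ ∧ (σ x, σ y) = (i, i))).card := by
  set R := (openSub G η).Reachable with hR
  apply Finset.card_le_card_of_injOn (fun σ v => if R x v ∨ R y v then i else σ v)
  · intro σ hσ
    simp only [Finset.mem_coe, Finset.mem_filter, Finset.mem_univ, true_and] at hσ ⊢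
    obtain ⟨hc, hv⟩ := hσ
    constructor
    · intro u v huv
      by_cases h : R x u ∨ R y u
      · have h' : R x v ∨ R y v := by
          rcases h with h | h
          · exact Or.inl (h.trans huv)
          · exact Or.inr (h.trans huv)
        simp [h, h']
      · have h' : ¬(R x v ∨ R y v) := by
          rintro (h' | h')
          · exact h (Or.inl (h'.trans huv.symm))
          · exact h (Or.inr (h'.trans huv.symm))
        simp [h, h', hc u v huv]
    · have h1 : R x x := SimpleGraph.Reachable.refl x
      have h2 : R y y := SimpleGraph.Reachable.refl y
      simp only [Prod.mk.injEq]
      constructor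
      · rw [if_pos (Or.inl h1)]
      · rw [if_pos (Or.inr h2)]
  · intro σ₁ h₁ σ₂ h₂ heq
    simp only [Finset.coe_filter, Set.mem_setOf_eq, Finset.mem_univ, true_and] at h₁ h₂
    obtain ⟨hc₁, hv₁⟩ := h₁
    obtain ⟨hc₂, hv₂⟩ := h₂
    have hx1 : σ₁ x = jk.1 := by rw [← hv₁]
    have hy1 : σ₁ y = jk.2 := by rw [← hv₁]
    have hx2 : σ₂ x = jk.1 := by rw [← hv₂]
    have hy2 : σ₂ y = jk.2 := by rw [← hv₂]
    funext v
    by_cases hxv : R x v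
    · rw [hc₁ x v hxv] at hx1
      rw [hc₂ x v hxv] at hx2
      rw [hx1, hx2]
    · by_cases hyv : R y v
      · rw [hc₁ y v hyv] at hy1
        rw [hc₂ y v hyv] at hy2
        rw [hy1, hy2]
      · have := congrFun heq v
        simpa [hxv, hyv] using this

open Classical in
lemma count_le (G : SimpleGraph V) (η : G.edgeSet → Bool) {q : ℕ}
    (i : Fin q) (x y : V) :
    ((univ : Finset (V → Fin q)).filter (fun σ => ConstOnClusters G η σ)).card ≤
      q ^ 2 * ((univ : Finset (V → Fin q)).filter
        (fun σ => ConstOnClusters G η σ ∧ (σ x, σ y) = (i, i))).card := by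
  rw [Finset.card_eq_sum_card_fiberwise
    (f := fun σ : V → Fin q => (σ x, σ y)) (t := univ) (fun _ _ => Finset.mem_univ _)]
  calc ∑ jk : Fin q × Fin q, ((univ.filter (fun σ : V → Fin q => ConstOnClusters G η σ)).filter
          (fun σ => (σ x, σ y) = jk)).card
      ≤ ∑ jk : Fin q × Fin q, ((univ : Finset (V → Fin q)).filter
          (fun σ => ConstOnClusters G η σ ∧ (σ x, σ y) = (i, i))).card := by
        apply Finset.sum_le_sum
        intro jk _
        rw [Finset.filter_filter]
        exact fiber_card_le G η i x y jk
    _ = q ^ 2 * _ := by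
        rw [Finset.sum_const, smul_eq_mul]
        congr 1
        simp [sq]

open Classical in
lemma count_lt (G : SimpleGraph V) (η : G.edgeSet → Bool) {q : ℕ} (hq : 2 ≤ q)
    (i : Fin q) (x y : V) (hreach : (openSub G η).Reachable x y) :
    ((univ : Finset (V → Fin q)).filter (fun σ => ConstOnClusters G η σ)).card <
      q ^ 2 * ((univ : Finset (V → Fin q)).filter
        (fun σ => ConstOnClusters G η σ ∧ (σ x, σ y) = (i, i))).card := by
  have hq0 : 0 < q := by omega
  -- a color different from i
  obtain ⟨j, hj⟩ : ∃ j : Fin q, j ≠ i := by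
    haveI : Nontrivial (Fin q) := ⟨⟨⟨0, by omega⟩, ⟨1, by omega⟩, by simp [Fin.ext_iff]⟩⟩
    exact exists_ne i
  rw [Finset.card_eq_sum_card_fiberwise
    (f := fun σ : V → Fin q => (σ x, σ y)) (t := univ) (fun _ _ => Finset.mem_univ _)]
  have hmain : ∑ jk : Fin q × Fin q,
      ((univ.filter (fun σ : V → Fin q => ConstOnClusters G η σ)).filter
        (fun σ => (σ x, σ y) = jk)).card <
      ∑ jk : Fin q × Fin q, ((univ : Finset (V → Fin q)).filter
        (fun σ => ConstOnClusters G η σ ∧ (σ x, σ y) = (i, i))).card := by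
    apply Finset.sum_lt_sum
    · intro jk _
      rw [Finset.filter_filter]
      exact fiber_card_le G η i x y jk
    · refine ⟨(j, i), Finset.mem_univ _, ?_⟩
      rw [Finset.filter_filter]
      have hempty : (univ.filter (fun σ : V → Fin q =>
          ConstOnClusters G η σ ∧ (σ x, σ y) = (j, i))) = ∅ := by
        apply Finset.filter_false_of_mem
        rintro σ - ⟨hc, hv⟩
        have : σ x = σ y := hc x y hreach
        rw [Prod.mk.injEq] at hv
        exact hj (by rw [← hv.1, this, hv.2])
      rw [hempty, Finset.card_empty]
      rw [Finset.card_pos]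
      exact ⟨fun _ => i, Finset.mem_filter.mpr ⟨Finset.mem_univ _, fun _ _ _ => rfl, rfl⟩⟩
  calc ∑ jk : Fin q × Fin q, _ < _ := hmain
    _ = q ^ 2 * _ := by
        rw [Finset.sum_const, smul_eq_mul]
        congr 1
        simp [sq]

/-- On a finite connected graph with at least two vertices,
at inverse temperature `β > 0` the indicators of `{X(x)=i}` and `{X(y)=i}` are
strictly positively correlated: the joint probability exceeds `1/q²`. -/
theorem potts_strict_positive_correlation (G : SimpleGraph V) [Fintype G.edgeSet]
    (hconn : G.Connected) (hcard : 1 < Fintype.card V)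
    (β : ℝ) (hβ : 0 < β) (q : ℕ) (hq : 2 ≤ q) (i : Fin q) (x y : V) (hxy : x ≠ y) :
    (∑ σ ∈ univ.filter (fun σ : V → Fin q => σ x = i ∧ σ y = i), pottsMeasure G β σ) >
      1 / (q : ℝ) ^ 2 := by
  classical
  haveI : Nonempty (Fin q) := ⟨⟨0, by omega⟩⟩
  set p : ℝ := 1 - Real.exp (-2 * β) with hpdef
  have hexp1 : Real.exp (-2 * β) < 1 := by
    rw [Real.exp_lt_one_iff]; nlinarith
  have hp0 : 0 < p := by rw [hpdef]; linarith
  have hp1 : p < 1 := by have := Real.exp_pos (-2 * β); rw [hpdef]; linarith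
  set W : (G.edgeSet → Bool) → ℝ := fun η => ∏ e : G.edgeSet, bWeight p (η e) with hWdef
  have hW0 : ∀ η, 0 ≤ W η := by
    intro η
    apply Finset.prod_nonneg
    intro e _
    unfold bWeight
    split <;> linarith
  have hexpand : ∀ s : Finset (V → Fin q),
      (∑ σ ∈ s, pottsWeight G β σ) = ∑ η : G.edgeSet → Bool,
        W η * ((s.filter (fun σ => ConstOnClusters G η σ)).card : ℝ) := by
    intro s
    calc ∑ σ ∈ s, pottsWeight G β σ
        = ∑ σ ∈ s, ∑ η : G.edgeSet → Bool,
            W η * (if ConstOnClusters G η σ then (1:ℝ) else 0) := by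
          refine Finset.sum_congr rfl fun σ _ => ?_
          rw [pottsWeight_eq_sum]
          refine Finset.sum_congr rfl fun η _ => ?_
          rw [esWeight_split, indicator_eq]
      _ = ∑ η : G.edgeSet → Bool, ∑ σ ∈ s,
            W η * (if ConstOnClusters G η σ then (1:ℝ) else 0) := Finset.sum_comm
      _ = _ := by
          refine Finset.sum_congr rfl fun η _ => ?_
          rw [← Finset.mul_sum, Finset.sum_boole]
  set Zp : ℝ := ∑ σ' : V → Fin q, pottsWeight G β σ' with hZdef
  have hZpos : 0 < Zp := by
    apply Finset.sum_pos
    · intro σ _; exact Real.exp_pos _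
    · exact Finset.univ_nonempty
  set F : Finset (V → Fin q) := univ.filter (fun σ => σ x = i ∧ σ y = i) with hFdef
  set S : ℝ := ∑ σ ∈ F, pottsWeight G β σ with hSdef
  have hmeas : (∑ σ ∈ F, pottsMeasure G β σ) = S / Zp := by
    rw [hSdef, Finset.sum_div]
    rfl
  have hfilter_eq : ∀ η : G.edgeSet → Bool,
      F.filter (fun σ => ConstOnClusters G η σ) =
        (univ : Finset (V → Fin q)).filter
          (fun σ => ConstOnClusters G η σ ∧ (σ x, σ y) = (i, i)) := by
    intro η
    rw [hFdef, Finset.filter_filter]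
    apply Finset.filter_congr
    intro σ _
    simp only [Prod.mk.injEq]
    tauto
  -- key inequality : Zp < q^2 * S
  have hkey : Zp < (q : ℝ) ^ 2 * S := by
    have hZexp : Zp = ∑ η : G.edgeSet → Bool, W η *
        (((univ : Finset (V → Fin q)).filter (fun σ => ConstOnClusters G η σ)).card : ℝ) :=
      hexpand univ
    have hSexp : S = ∑ η : G.edgeSet → Bool, W η *
        (((univ : Finset (V → Fin q)).filter
          (fun σ => ConstOnClusters G η σ ∧ (σ x, σ y) = (i, i))).card : ℝ) := by
      rw [hSdef, hexpand F]
      exact Finset.sum_congr rfl fun η _ => by rw [hfilter_eq η]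
    rw [hZexp, hSexp, Finset.mul_sum]
    apply Finset.sum_lt_sum
    · intro η _
      have h := count_le G η i x y
      calc W η * (((univ : Finset (V → Fin q)).filter
              (fun σ => ConstOnClusters G η σ)).card : ℝ)
          ≤ W η * ((q : ℝ) ^ 2 * (((univ : Finset (V → Fin q)).filter
              (fun σ => ConstOnClusters G η σ ∧ (σ x, σ y) = (i, i))).card : ℝ)) := by
            apply mul_le_mul_of_nonneg_left _ (hW0 η)
            exact_mod_cast h
        _ = (q : ℝ) ^ 2 * (W η * _) := by ring
    · refine ⟨fun _ => true, Finset.mem_univ _, ?_⟩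
      have hreach : (openSub G (fun _ => true)).Reachable x y := by
        have hle : G ≤ openSub G (fun _ => true) := by
          intro a b hab
          rw [openSub, SimpleGraph.fromEdgeSet_adj]
          exact ⟨⟨G.mem_edgeSet.mpr hab, rfl⟩, hab.ne⟩
        exact (hconn.preconnected x y).mono hle
      have h := count_lt G (fun _ => true) hq i x y hreach
      have hWpos : 0 < W (fun _ => true) := by
        apply Finset.prod_pos
        intro e _
        simpa [bWeight] using hp0
      calc W (fun _ => true) * (((univ : Finset (V → Fin q)).filter
              (fun σ => ConstOnClusters G (fun _ => true) σ)).card : ℝ)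
          < W (fun _ => true) * ((q : ℝ) ^ 2 * (((univ : Finset (V → Fin q)).filter
              (fun σ => ConstOnClusters G (fun _ => true) σ ∧ (σ x, σ y) = (i, i))).card : ℝ)) := by
            apply mul_lt_mul_of_pos_left _ hWpos
            exact_mod_cast h
        _ = (q : ℝ) ^ 2 * (W (fun _ => true) * _) := by ring
  rw [hmeas, gt_iff_lt, div_lt_div_iff₀ (by positivity) hZpos]
  nlinarith [hkey]
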